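/- For real p with 1 < p < ∞, the set D = {(F, f, A, v) ∈ ℝ⁴ : F ≥ 0, f ≥ 0, A > 0, v > 0, v ≥ A, f^p ≤ F * v^(p-1)} is a convex subset of ℝ⁴. -/

import Mathlib

open Real

private lemma holder2 {p : ℝ} (hp : 1 < p) {x1 x2 y1 y2 : ℝ}
    (hx1 : 0 ≤ x1) (hx2 : 0 ≤ x2) (hy1 : 0 ≤ y1) (hy2 : 0 ≤ y2) :
    x1 ^ (1/p) * y1 ^ (1 - 1/p) + x2 ^ (1/p) * y2 ^ (1 - 1/p) ≤
      (x1 + x2) ^ (1/p) * (y1 + y2) ^ (1 - 1/p) := by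
  have hpq : p.HolderConjugate (Real.conjExponent p) := .conjExponent hp
  set q := Real.conjExponent p with hq
  have hp0 : 0 < p := hpq.pos
  have hq0 : 0 < q := hpq.symm.pos
  have key := Real.inner_le_Lp_mul_Lq_of_nonneg (Finset.univ : Finset (Fin 2))
      (f := fun i => if i = 0 then x1 ^ (1/p) else x2 ^ (1/p))
      (g := fun i => if i = 0 then y1 ^ (1/q) else y2 ^ (1/q))
      hpq (by intro i _; split <;> positivity)
      (by intro i _; split <;> positivity)
  simp only [Fin.sum_univ_two, if_pos, if_neg (by decide : (1 : Fin 2) ≠ 0)] at key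
  have e1 : ∀ x : ℝ, 0 ≤ x → (x ^ (1/p)) ^ p = x := fun x hx => by
    rw [← Real.rpow_mul hx, one_div, inv_mul_cancel₀ hp0.ne', Real.rpow_one]
  have e2 : ∀ y : ℝ, 0 ≤ y → (y ^ (1/q)) ^ q = y := fun y hy => by
    rw [← Real.rpow_mul hy, one_div, inv_mul_cancel₀ hq0.ne', Real.rpow_one]
  rw [e1 _ hx1, e1 _ hx2, e2 _ hy1, e2 _ hy2] at key
  have hqinv : 1 / q = 1 - 1 / p := by
    have := hpq.inv_add_inv_eq_one
    rw [one_div, one_div]; linarith [this]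
  rw [hqinv] at key
  exact key

private lemma step1 {p F f v : ℝ} (hp : 1 < p) (hF : 0 ≤ F) (hf : 0 ≤ f) (hv : 0 < v)
    (h : f ^ p ≤ F * v ^ (p - 1)) : f ≤ F ^ (1/p) * (v ^ (p-1)) ^ (1/p) := by
  have hp0 : 0 < p := lt_trans one_pos hp
  have h1 : (f ^ p) ^ (1/p) ≤ (F * v ^ (p-1)) ^ (1/p) :=
    Real.rpow_le_rpow (by positivity) h (by positivity)
  rw [← Real.rpow_mul hf, mul_one_div, div_self hp0.ne', Real.rpow_one,
    Real.mul_rpow hF (by positivity)] at h1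
  exact h1

theorem dyadic_hardy_domain_convex (p : ℝ) (hp : 1 < p) :
    Convex ℝ {x : ℝ × ℝ × ℝ × ℝ |
      0 ≤ x.1 ∧ 0 ≤ x.2.1 ∧ 0 < x.2.2.1 ∧ 0 < x.2.2.2 ∧ x.2.2.1 ≤ x.2.2.2 ∧
      x.2.1 ^ p ≤ x.1 * x.2.2.2 ^ (p - 1)} := by
  rintro ⟨F1, f1, A1, v1⟩ ⟨hF1, hf1, hA1, hv1, hAv1, h1⟩
    ⟨F2, f2, A2, v2⟩ ⟨hF2, hf2, hA2, hv2, hAv2, h2⟩ a b ha hb hab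
  dsimp only at hF1 hf1 hA1 hv1 hAv1 h1 hF2 hf2 hA2 hv2 hAv2 h2
  have hp0 : 0 < p := lt_trans one_pos hp
  simp only [Set.mem_setOf_eq, Prod.smul_mk, Prod.mk_add_mk, smul_eq_mul,
    Prod.fst_add, Prod.snd_add, Prod.smul_fst, Prod.smul_snd]
  have pos : ∀ {x y : ℝ}, 0 < x → 0 < y → 0 < a * x + b * y := by
    intro x y hx hy
    rcases ha.lt_or_eq with h | h
    · have : 0 ≤ b * y := by positivity
      nlinarith
    · nlinarith
  refine ⟨by positivity, by positivity, pos hA1 hA2, pos hv1 hv2, by nlinarith, ?_⟩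
  -- main inequality
  have key : a * f1 + b * f2 ≤
      (a * F1 + b * F2) ^ (1/p) * (a * v1 + b * v2) ^ (1 - 1/p) := by
    have s1 := step1 hp hF1 hf1 hv1 h1
    have s2 := step1 hp hF2 hf2 hv2 h2
    have e : ∀ c F v : ℝ, 0 ≤ c → 0 ≤ F → 0 < v →
        c * (F ^ (1/p) * (v ^ (p-1)) ^ (1/p)) = (c*F) ^ (1/p) * (c*v) ^ (1 - 1/p) := by
      intro c F v hc hF hv
      have hv1 : (v ^ (p-1)) ^ (1/p) = v ^ (1 - 1/p) := by
        rw [← Real.rpow_mul hv.le, mul_one_div]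
        congr 1
        field_simp
      have hsum : 1/p + (1 - 1/p) = 1 := by ring
      have hc' : c ^ (1/p) * c ^ (1 - 1/p) = c := by
        rw [← Real.rpow_add' hc (by rw [hsum]; norm_num), hsum, Real.rpow_one]
      rw [hv1, Real.mul_rpow hc hF, Real.mul_rpow hc hv.le]
      conv_lhs => rw [← hc']
      ring
    calc a * f1 + b * f2
        ≤ a * (F1 ^ (1/p) * (v1 ^ (p-1)) ^ (1/p)) + b * (F2 ^ (1/p) * (v2 ^ (p-1)) ^ (1/p)) := by
          have t1 : 0 ≤ F1 ^ (1/p) * (v1 ^ (p-1)) ^ (1/p) := by positivity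
          nlinarith [mul_le_mul_of_nonneg_left s1 ha, mul_le_mul_of_nonneg_left s2 hb]
      _ = (a*F1) ^ (1/p) * (a*v1) ^ (1 - 1/p) + (b*F2) ^ (1/p) * (b*v2) ^ (1 - 1/p) := by
          rw [e a F1 v1 ha hF1 hv1, e b F2 v2 hb hF2 hv2]
      _ ≤ (a*F1 + b*F2) ^ (1/p) * (a*v1 + b*v2) ^ (1 - 1/p) :=
          holder2 hp (by positivity) (by positivity) (by positivity) (by positivity)
  have hlhs : 0 ≤ a * f1 + b * f2 := by positivity
  have := Real.rpow_le_rpow hlhs key hp0.le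
  refine this.trans_eq ?_
  rw [Real.mul_rpow (by positivity) (by positivity), ← Real.rpow_mul (by positivity),
    ← Real.rpow_mul (by positivity), one_div, inv_mul_cancel₀ hp0.ne', Real.rpow_one]
  congr 2
  field_simp
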